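/- Let g : ℝ^{K×n} → ℝ be differentiable, λ_W, λ_H > 0, and define f(W,H) = g(WH) + (λ_W/2)‖W‖_F² + (λ_H/2)‖H‖_F² for W ∈ ℝ^{K×d} and H ∈ ℝ^{d×n}. Then every critical point (W,H) of f (i.e., a point where the gradient of f vanishes) satisfies W⊤W = (λ_H/λ_W) H H⊤, and in particular λ_W ‖W‖_F² = λ_H ‖H‖_F². -/

import Mathlib

open Finset

/-- critical-point scaling identity. Let `g : ℝ^{K×n} → ℝ` be
differentiable, `λ_W, λ_H > 0`, and
`f(W,H) = g(WH) + (λ_W/2)‖W‖_F² + (λ_H/2)‖H‖_F²`. Then every critical point `(W,H)`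
of `f` satisfies `WᵀW = (λ_H/λ_W) HHᵀ`; in particular `λ_W‖W‖_F² = λ_H‖H‖_F²`. -/
theorem critical_point_scaling_identity {K d n : ℕ} (hK : 1 ≤ K) (hd : 1 ≤ d)
    (hn : 1 ≤ n)
    (g : (Fin K → Fin n → ℝ) → ℝ) (hg : Differentiable ℝ g)
    (lW lH : ℝ) (hlW : 0 < lW) (hlH : 0 < lH)
    (W : Fin K → Fin d → ℝ) (H : Fin d → Fin n → ℝ)
    (hcrit : fderiv ℝ (fun p : (Fin K → Fin d → ℝ) × (Fin d → Fin n → ℝ) =>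
      g (fun k j => ∑ t, p.1 k t * p.2 t j)
        + lW / 2 * ∑ k, ∑ t, (p.1 k t) ^ 2
        + lH / 2 * ∑ t, ∑ j, (p.2 t j) ^ 2) (W, H) = 0) :
    (∀ t t' : Fin d, ∑ k : Fin K, W k t * W k t'
        = (lH / lW) * ∑ j : Fin n, H t j * H t' j) ∧
      lW * (∑ k, ∑ t, (W k t) ^ 2) = lH * (∑ t, ∑ j, (H t j) ^ 2) := by
  set F : (Fin K → Fin d → ℝ) × (Fin d → Fin n → ℝ) → ℝ := fun p =>
      g (fun k j => ∑ t, p.1 k t * p.2 t j)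
        + lW / 2 * ∑ k, ∑ t, (p.1 k t) ^ 2
        + lH / 2 * ∑ t, ∑ j, (p.2 t j) ^ 2 with hF
  set G := fderiv ℝ g (fun k j => ∑ t, W k t * H t j) with hGdef
  -- The key directional-derivative identity
  have key : ∀ (U : Fin K → Fin d → ℝ) (V : Fin d → Fin n → ℝ),
      G (fun k j => ∑ t, (W k t * V t j + U k t * H t j))
        + lW * (∑ k, ∑ t, W k t * U k t)
        + lH * (∑ t, ∑ j, H t j * V t j) = 0 := by
    intro U V
    set c : ℝ → (Fin K → Fin d → ℝ) × (Fin d → Fin n → ℝ) :=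
        fun s => (fun k t => W k t + s * U k t, fun t j => H t j + s * V t j) with hcdef
    have hc0 : c 0 = (W, H) := by simp [hcdef]
    have hcd : HasDerivAt c (U, V) 0 := by
      apply HasDerivAt.prodMk
      · apply hasDerivAt_pi.mpr; intro k; apply hasDerivAt_pi.mpr; intro t
        simpa using ((hasDerivAt_id (0:ℝ)).mul_const (U k t)).const_add (W k t)
      · apply hasDerivAt_pi.mpr; intro t; apply hasDerivAt_pi.mpr; intro j
        simpa using ((hasDerivAt_id (0:ℝ)).mul_const (V t j)).const_add (H t j)
    have hFdiff : DifferentiableAt ℝ F (W, H) := by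
      rw [hF]
      fun_prop
    have hF0 : HasFDerivAt F
        (0 : ((Fin K → Fin d → ℝ) × (Fin d → Fin n → ℝ)) →L[ℝ] ℝ) (W, H) := by
      have := hFdiff.hasFDerivAt
      rwa [hcrit] at this
    have htot1 : HasDerivAt (F ∘ c) 0 0 := by
      rw [← hc0] at hF0
      simpa using hF0.comp_hasDerivAt 0 hcd
    have hinner : HasDerivAt
        (fun s => (fun k j => ∑ t, (W k t + s * U k t) * (H t j + s * V t j)))
        (fun k j => ∑ t, (W k t * V t j + U k t * H t j)) 0 := by
      apply hasDerivAt_pi.mpr; intro k; apply hasDerivAt_pi.mpr; intro j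
      have : HasDerivAt (fun s => ∑ t, (W k t + s * U k t) * (H t j + s * V t j))
          (∑ t, (U k t * H t j + W k t * V t j)) 0 := by
        apply HasDerivAt.fun_sum; intro t _
        simpa using (((hasDerivAt_id (0:ℝ)).mul_const (U k t)).const_add (W k t)).fun_mul
          (((hasDerivAt_id (0:ℝ)).mul_const (V t j)).const_add (H t j))
      refine this.congr_deriv ?_
      exact Finset.sum_congr rfl fun t _ => by ring
    have hgF : HasFDerivAt g G
        (fun k j => ∑ t, (W k t + (0:ℝ) * U k t) * (H t j + 0 * V t j)) := by
      have : (fun k j => ∑ t, (W k t + (0:ℝ) * U k t) * (H t j + 0 * V t j))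
          = (fun k j => ∑ t, W k t * H t j) := by simp
      rw [this, hGdef]
      exact (hg _).hasFDerivAt
    have hpart1 : HasDerivAt
        (fun s => g (fun k j => ∑ t, (W k t + s * U k t) * (H t j + s * V t j)))
        (G (fun k j => ∑ t, (W k t * V t j + U k t * H t j))) 0 :=
      hgF.comp_hasDerivAt 0 hinner
    have hpart2 : HasDerivAt (fun s => lW / 2 * ∑ k, ∑ t, (W k t + s * U k t) ^ 2)
        (lW * (∑ k, ∑ t, W k t * U k t)) 0 := by
      have : HasDerivAt (fun s => ∑ k, ∑ t, (W k t + s * U k t) ^ 2)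
          (∑ k, ∑ t, (2 * W k t * U k t)) 0 := by
        apply HasDerivAt.fun_sum; intro k _; apply HasDerivAt.fun_sum; intro t _
        have h := (((hasDerivAt_id (0:ℝ)).mul_const (U k t)).const_add (W k t)).fun_pow 2
        simpa using h
      have h2 := this.const_mul (lW / 2)
      refine h2.congr_deriv ?_
      simp only [Finset.mul_sum]
      refine Finset.sum_congr rfl fun k _ => Finset.sum_congr rfl fun t _ => ?_
      ring
    have hpart3 : HasDerivAt (fun s => lH / 2 * ∑ t, ∑ j, (H t j + s * V t j) ^ 2)
        (lH * (∑ t, ∑ j, H t j * V t j)) 0 := by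
      have : HasDerivAt (fun s => ∑ t, ∑ j, (H t j + s * V t j) ^ 2)
          (∑ t, ∑ j, (2 * H t j * V t j)) 0 := by
        apply HasDerivAt.fun_sum; intro t _; apply HasDerivAt.fun_sum; intro j _
        have h := (((hasDerivAt_id (0:ℝ)).mul_const (V t j)).const_add (H t j)).fun_pow 2
        simpa using h
      have h2 := this.const_mul (lH / 2)
      refine h2.congr_deriv ?_
      simp only [Finset.mul_sum]
      refine Finset.sum_congr rfl fun t _ => Finset.sum_congr rfl fun j _ => ?_
      ring
    have htot2 : HasDerivAt (F ∘ c)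
        (G (fun k j => ∑ t, (W k t * V t j + U k t * H t j))
          + lW * (∑ k, ∑ t, W k t * U k t)
          + lH * (∑ t, ∑ j, H t j * V t j)) 0 := by
      have := (hpart1.add hpart2).add hpart3
      exact this
    exact htot2.unique htot1
  -- Specialize to coordinate directions
  have rel1 : ∀ (k0 : Fin K) (t0 : Fin d),
      G (fun k j => if k = k0 then H t0 j else 0) = -(lW * W k0 t0) := by
    intro k0 t0
    have h := key (fun k t => if k = k0 then if t = t0 then 1 else 0 else 0) 0
    have e1 : (fun k j => ∑ t, (W k t * (0 : Fin d → Fin n → ℝ) t j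
        + (if k = k0 then if t = t0 then (1:ℝ) else 0 else 0) * H t j))
        = (fun k j => if k = k0 then H t0 j else 0) := by
      funext k j
      by_cases hk : k = k0 <;> simp [hk, ite_mul, Finset.sum_ite_eq]
    have e2 : (∑ k, ∑ t, W k t * (if k = k0 then if t = t0 then (1:ℝ) else 0 else 0))
        = W k0 t0 := by
      rw [Finset.sum_eq_single k0]
      · rw [Finset.sum_eq_single t0] <;> simp_all
      · intro b _ hb; simp [hb]
      · simp
    rw [e1, e2] at h
    simp only [Pi.zero_apply, mul_zero, Finset.sum_const_zero] at h
    linarith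
  have rel2 : ∀ (t0 : Fin d) (j0 : Fin n),
      G (fun k j => if j = j0 then W k t0 else 0) = -(lH * H t0 j0) := by
    intro t0 j0
    have h := key 0 (fun t j => if t = t0 then if j = j0 then 1 else 0 else 0)
    have e1 : (fun k j => ∑ t, (W k t * (if t = t0 then if j = j0 then (1:ℝ) else 0 else 0)
        + (0 : Fin K → Fin d → ℝ) k t * H t j))
        = (fun k j => if j = j0 then W k t0 else 0) := by
      funext k j
      by_cases hj : j = j0 <;> simp [hj, mul_ite, Finset.sum_ite_eq]
    have e2 : (∑ t, ∑ j, H t j * (if t = t0 then if j = j0 then (1:ℝ) else 0 else 0))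
        = H t0 j0 := by
      rw [Finset.sum_eq_single t0]
      · rw [Finset.sum_eq_single j0] <;> simp_all
      · intro b _ hb; simp [hb]
      · simp
    rw [e1, e2] at h
    simp only [Pi.zero_apply, zero_mul, mul_zero, Finset.sum_const_zero] at h
    linarith
  -- The main balance identity
  have main : ∀ t t' : Fin d,
      lW * (∑ k, W k t * W k t') = lH * (∑ j, H t j * H t' j) := by
    intro t t'
    have eqM : (fun k j => W k t * H t' j)
        = ∑ k0, W k0 t • (fun k j => if k = k0 then H t' j else (0:ℝ)) := by
      funext k j
      simp only [Finset.sum_apply, Pi.smul_apply, smul_eq_mul]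
      rw [Finset.sum_eq_single k]
      · simp
      · intro b _ hb; simp [Ne.symm hb]
      · simp
    have eqN : (fun k j => W k t * H t' j)
        = ∑ j0, H t' j0 • (fun k j => if j = j0 then W k t else (0:ℝ)) := by
      funext k j
      simp only [Finset.sum_apply, Pi.smul_apply, smul_eq_mul]
      rw [Finset.sum_eq_single j]
      · simp [mul_comm]
      · intro b _ hb; simp [Ne.symm hb]
      · simp
    have A1 : G (fun k j => W k t * H t' j) = -(lW * ∑ k, W k t * W k t') := by
      rw [eqM, map_sum]
      simp only [map_smul, smul_eq_mul, rel1]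
      rw [Finset.mul_sum, ← Finset.sum_neg_distrib]
      exact Finset.sum_congr rfl fun k _ => by ring
    have A2 : G (fun k j => W k t * H t' j) = -(lH * ∑ j, H t j * H t' j) := by
      rw [eqN, map_sum]
      simp only [map_smul, smul_eq_mul, rel2]
      rw [Finset.mul_sum, ← Finset.sum_neg_distrib]
      exact Finset.sum_congr rfl fun j _ => by ring
    have := A1.symm.trans A2
    linarith
  constructor
  · intro t t'
    have h := main t t'
    field_simp
    linarith
  · have swap : (∑ k, ∑ t, (W k t) ^ 2) = ∑ t : Fin d, ∑ k : Fin K, W k t * W k t := by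
      rw [Finset.sum_comm]
      exact Finset.sum_congr rfl fun t _ => Finset.sum_congr rfl fun k _ => sq (W k t) ▸ by ring
    calc lW * (∑ k, ∑ t, (W k t) ^ 2)
        = ∑ t : Fin d, lW * ∑ k : Fin K, W k t * W k t := by rw [swap, Finset.mul_sum]
      _ = ∑ t : Fin d, lH * ∑ j : Fin n, H t j * H t j := Finset.sum_congr rfl fun t _ => main t t
      _ = lH * (∑ t, ∑ j, (H t j) ^ 2) := by
          rw [Finset.mul_sum]
          exact Finset.sum_congr rfl fun t _ => by
            rw [Finset.mul_sum, Finset.mul_sum]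
            exact Finset.sum_congr rfl fun j _ => by ring
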